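/- Let y, λ ∈ ℝ₊^M with y ≠ 0, λ ≠ 0, and supp(y) ⊆ supp(λ); set Y = ‖y‖₁ and Λ = ‖λ‖₁. Let ε > 0 and suppose I(y‖λ) ≤ ε. Then both I(y/Y ‖ λ/Λ) ≤ ε/Y and I(Y‖Λ) ≤ ε, where I(Y‖Λ) = Y·log(Y/Λ) + Λ − Y is the scalar I-divergence. -/

import Mathlib

noncomputable section

/-- ℓ₁ norm of a vector. -/
def l1norm {M : ℕ} (v : Fin M → ℝ) : ℝ := ∑ j, |v j|

/-- I-divergence of nonnegative vectors (with the convention `0 · log 0 = 0`, which holds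
automatically since `Real.log 0 = 0`). -/
def Idiv {M : ℕ} (x y : Fin M → ℝ) : ℝ :=
  ∑ j, (x j * Real.log (x j / y j) + y j - x j)

lemma term_nonneg (a b : ℝ) (ha : 0 ≤ a) (hb : 0 ≤ b) (h : b = 0 → a = 0) :
    0 ≤ a * Real.log (a / b) + b - a := by
  rcases eq_or_lt_of_le hb with hb0 | hb0
  · have ha0 := h hb0.symm
    simp [ha0, ← hb0]
  rcases eq_or_lt_of_le ha with ha0 | ha0
  · simp [← ha0]; linarith
  · have hlog : Real.log (b / a) ≤ b / a - 1 :=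
      Real.log_le_sub_one_of_pos (by positivity)
    have hneg : Real.log (a / b) = - Real.log (b / a) := by
      rw [← Real.log_inv]; congr 1; field_simp
    have hcancel : a * (b / a) = b := by field_simp
    nlinarith [mul_le_mul_of_nonneg_left hlog ha]

/-- Lemma 1: if `I(y‖λ) ≤ ε` then `I(y/Y ‖ λ/Λ) ≤ ε/Y` and `I(Y‖Λ) ≤ ε`, where `Y = ‖y‖₁`,
`Λ = ‖λ‖₁`, and `I(Y‖Λ) = Y·log(Y/Λ) + Λ − Y` is the scalar I-divergence. -/
theorem Idiv_bounds {M : ℕ} (y lam : Fin M → ℝ)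
    (hy : ∀ j, 0 ≤ y j) (hlam : ∀ j, 0 ≤ lam j)
    (hy0 : y ≠ 0) (hlam0 : lam ≠ 0)
    (hsupp : ∀ j, lam j = 0 → y j = 0)
    (ε : ℝ) (hε : 0 < ε)
    (h : Idiv y lam ≤ ε) :
    Idiv (fun j => y j / l1norm y) (fun j => lam j / l1norm lam) ≤ ε / l1norm y ∧
      l1norm y * Real.log (l1norm y / l1norm lam) + l1norm lam - l1norm y ≤ ε := by
  classical
  set Y := l1norm y with hYdef
  set L := l1norm lam with hLdef
  have hYsum : Y = ∑ j, y j := by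
    simp [hYdef, l1norm, abs_of_nonneg (hy _)]
  have hLsum : L = ∑ j, lam j := by
    simp [hLdef, l1norm, abs_of_nonneg (hlam _)]
  have hYpos : 0 < Y := by
    obtain ⟨j, hj⟩ := Function.ne_iff.mp hy0
    have hj' : 0 < y j := (hy j).lt_of_ne (by simpa using Ne.symm hj)
    rw [hYsum]
    exact Finset.sum_pos' (fun i _ => hy i) ⟨j, Finset.mem_univ j, hj'⟩
  have hLpos : 0 < L := by
    obtain ⟨j, hj⟩ := Function.ne_iff.mp hlam0
    have hj' : 0 < lam j := (hlam j).lt_of_ne (by simpa using Ne.symm hj)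
    rw [hLsum]
    exact Finset.sum_pos' (fun i _ => hlam i) ⟨j, Finset.mem_univ j, hj'⟩
  set S := ∑ j, y j * Real.log (y j / lam j) with hSdef
  have hA : Idiv y lam = S + L - Y := by
    simp only [Idiv, hSdef, hYsum, hLsum, Finset.sum_add_distrib, Finset.sum_sub_distrib]
  have hterm : ∀ j, (y j / Y) * Real.log ((y j / Y) / (lam j / L)) =
      (y j * Real.log (y j / lam j)) / Y - (y j * Real.log (Y / L)) / Y := by
    intro j
    rcases eq_or_lt_of_le (hy j) with h0 | h0
    · simp [← h0]
    · have hlj0 : lam j ≠ 0 := fun e => absurd (hsupp j e) (ne_of_gt h0)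
      have hlj : 0 < lam j := (hlam j).lt_of_ne (Ne.symm hlj0)
      have h1 : (y j / Y) / (lam j / L) = (y j / lam j) / (Y / L) := by
        field_simp
      rw [h1, Real.log_div (by positivity) (by positivity)]
      ring
  have hB : Idiv (fun j => y j / Y) (fun j => lam j / L)
      = S / Y - Real.log (Y / L) := by
    have hcongr : Idiv (fun j => y j / Y) (fun j => lam j / L)
        = ∑ j, ((y j * Real.log (y j / lam j)) / Y - (y j * Real.log (Y / L)) / Y
            + lam j / L - y j / Y) := by
      refine Finset.sum_congr rfl fun j _ => ?_
      rw [hterm j]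
    rw [hcongr]
    rw [show ∀ f g h k : Fin M → ℝ, (∑ j, (f j - g j + h j - k j))
        = (∑ j, f j) - (∑ j, g j) + (∑ j, h j) - (∑ j, k j) from
      fun f g h k => by
        simp [Finset.sum_add_distrib, Finset.sum_sub_distrib]]
    rw [← Finset.sum_div, ← Finset.sum_div, ← Finset.sum_div, ← Finset.sum_div,
      ← Finset.sum_mul, ← hSdef, ← hYsum, ← hLsum]
    field_simp
    ring
  have hC : 0 ≤ Idiv (fun j => y j / Y) (fun j => lam j / L) := by
    refine Finset.sum_nonneg fun j _ => ?_
    dsimp only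
    refine term_nonneg _ _ (div_nonneg (hy j) hYpos.le) (div_nonneg (hlam j) hLpos.le) fun e => ?_
    have hl : lam j = 0 := by
      rcases div_eq_zero_iff.mp e with h' | h'
      · exact h'
      · exact absurd h' (ne_of_gt hLpos)
    rw [hsupp j hl, zero_div]
  have hD : 0 ≤ Y * Real.log (Y / L) + L - Y :=
    term_nonneg Y L hYpos.le hLpos.le (fun e => absurd e (ne_of_gt hLpos))
  have hIle : S + L - Y ≤ ε := hA ▸ h
  constructor
  · rw [hB]
    have key : S - Y * Real.log (Y / L) ≤ ε := by linarith
    have : S / Y - Real.log (Y / L) = (S - Y * Real.log (Y / L)) / Y := by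
      field_simp
    rw [this]
    gcongr
  · have hC' : 0 ≤ S / Y - Real.log (Y / L) := hB ▸ hC
    have : Y * Real.log (Y / L) ≤ S := by
      have := mul_le_mul_of_nonneg_left hC' hYpos.le
      have hS : Y * (S / Y) = S := by field_simp
      nlinarith
    linarith
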